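/- Let r ≥ 2 and n be integers with n ≥ 6r. Then the binomial coefficient C(n+r, r−1) satisfies C(n+r, r−1) ≤ (n−r+1)^{n−r+1} / (n−r+1)!. -/

import Mathlib

open Real

-- (a+1)^k ≤ c * a^k when exp(k/a) ≤ c
lemma aux_exp (k a : ℕ) (c : ℝ) (h0 : 0 < a) (h : Real.exp (k / a) ≤ c) :
    ((a : ℝ) + 1) ^ k ≤ c * (a : ℝ) ^ k := by
  have ha : (0:ℝ) < a := by exact_mod_cast h0
  have h1 : ((a : ℝ) + 1) = (1 + 1/a) * a := by field_simp
  rw [h1, mul_pow]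
  have h2 : (1 + 1/(a:ℝ)) ^ k ≤ c := by
    calc (1 + 1/(a:ℝ)) ^ k ≤ (Real.exp (1/a)) ^ k := by
          apply pow_le_pow_left₀ (by positivity)
          have := Real.add_one_le_exp (1/(a:ℝ))
          linarith
      _ = Real.exp (k / a) := by
          rw [← Real.exp_nat_mul]; ring_nf
      _ ≤ c := h
  exact mul_le_mul_of_nonneg_right h2 (by positivity)

lemma exp_half_lt_two : Real.exp (1/2 : ℝ) < 2 := by
  have h := Real.log_two_gt_d9
  have : Real.exp (1/2 : ℝ) < Real.exp (Real.log 2) := by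
    apply Real.exp_lt_exp.2; linarith
  rwa [Real.exp_log (by norm_num)] at this

lemma exp_one_lt_three : Real.exp (1 : ℝ) < 3 := by
  have := Real.exp_one_lt_d9; linarith

-- base: (7r)^(r-1) ≤ (r-1)! * 2^(5r) for r ≥ 2
lemma base_r (r : ℕ) (hr : 2 ≤ r) :
    ((7 * r : ℕ) : ℝ) ^ (r - 1) ≤ ((r-1).factorial : ℝ) * 2 ^ (5 * r) := by
  induction r, hr using Nat.le_induction with
  | base => norm_num
  | succ r hr ih =>
    have hr0 : (0:ℝ) < r := by positivity
    have h1 : ((7 * (r+1) : ℕ) : ℝ) ^ (r + 1 - 1) = (7 * ((r:ℝ)+1)) ^ r := by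
      push_cast; ring_nf
    rw [h1]
    have h2 : (7 * ((r:ℝ)+1)) ^ r = 7^r * ((r:ℝ)+1)^r := by rw [mul_pow]
    have h3 : ((r:ℝ)+1)^r ≤ 3 * (r:ℝ)^r := by
      apply aux_exp r r 3 (by omega)
      have : ((r:ℝ)/r) = 1 := by field_simp
      rw [this]; exact le_of_lt _root_.exp_one_lt_three
    have h4 : (7 * ((r:ℝ)+1)) ^ r ≤ 3 * (7*(r:ℝ))^r := by
      rw [h2, mul_pow]; nlinarith [pow_nonneg (le_of_lt hr0) r, pow_pos hr0 r,
        pow_pos (show (0:ℝ) < 7 by norm_num) r,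
        mul_le_mul_of_nonneg_left h3 (le_of_lt (pow_pos (show (0:ℝ) < 7 by norm_num) r))]
    have h5 : (7*(r:ℝ))^r = (7*(r:ℝ)) * (7*(r:ℝ))^(r-1) := by
      rw [mul_comm (7*(r:ℝ)), ← pow_succ, show r-1+1 = r from by omega]
    have hih : ((7*r:ℕ):ℝ)^(r-1) ≤ ((r-1).factorial : ℝ) * 2^(5*r) := ih
    have hc : ((7*r:ℕ):ℝ) = 7*(r:ℝ) := by push_cast; ring
    rw [hc] at hih
    have hfact : ((r+1-1).factorial : ℝ) = (r:ℝ) * ((r-1).factorial : ℝ) := by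
      have : (r+1-1) = (r-1)+1 := by omega
      rw [this, Nat.factorial_succ]
      push_cast [show r - 1 + 1 = r by omega]
      ring
    rw [hfact]
    have h6 : (7 * ((r:ℝ)+1)) ^ r ≤ 3 * ((7*(r:ℝ)) * (((r-1).factorial : ℝ) * 2^(5*r))) := by
      calc (7 * ((r:ℝ)+1)) ^ r ≤ 3 * (7*(r:ℝ))^r := h4
        _ = 3 * ((7*(r:ℝ)) * (7*(r:ℝ))^(r-1)) := by rw [h5]
        _ ≤ 3 * ((7*(r:ℝ)) * (((r-1).factorial : ℝ) * 2^(5*r))) := by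
            apply mul_le_mul_of_nonneg_left _ (by norm_num)
            apply mul_le_mul_of_nonneg_left hih (by positivity)
    have h7 : 2^(5*(r+1)) = (32:ℝ) * 2^(5*r) := by
      rw [show 5*(r+1) = 5*r + 5 by ring, pow_add]; ring
    rw [h7]
    have hfp : (0:ℝ) < ((r-1).factorial : ℝ) := by positivity
    have hpp : (0:ℝ) < (2:ℝ)^(5*r) := by positivity
    have hrr : (2:ℝ) ≤ r := by exact_mod_cast hr
    nlinarith [mul_pos hfp hpp]

-- main: (n+r)^(r-1) ≤ (r-1)! * 2^(n-r) for r ≥ 2, n ≥ 6r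
lemma key (r n : ℕ) (hr : 2 ≤ r) (hn : 6 * r ≤ n) :
    ((n + r : ℕ) : ℝ) ^ (r - 1) ≤ ((r-1).factorial : ℝ) * 2 ^ (n - r) := by
  induction n, hn using Nat.le_induction with
  | base =>
    have h1 : 6*r + r = 7*r := by ring
    have h2 : 6*r - r = 5*r := by omega
    rw [h1, h2]; exact base_r r hr
  | succ n hn ih =>
    have h1 : (n + 1 + r : ℕ) = (n + r) + 1 := by omega
    have h2 : (n + 1 - r) = (n - r) + 1 := by omega
    rw [h1, h2, pow_succ]
    have ha : 0 < n + r := by omega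
    have hcast : ((n + r + 1 : ℕ) : ℝ) = ((n+r:ℕ):ℝ) + 1 := by push_cast; ring
    rw [hcast]
    have h3 : (((n+r:ℕ)):ℝ) ^ (r-1) ≤ ((r-1).factorial : ℝ) * 2^(n-r) := ih
    have h4 : (((n+r:ℕ):ℝ) + 1) ^ (r-1) ≤ 2 * ((n+r:ℕ):ℝ) ^ (r-1) := by
      apply aux_exp (r-1) (n+r) 2 ha
      have hle : ((r-1:ℕ):ℝ) / ((n+r:ℕ):ℝ) ≤ 1/2 := by
        rw [div_le_iff₀ (by exact_mod_cast ha)]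
        have : (2:ℝ) * (r-1:ℕ) ≤ ((n+r:ℕ):ℝ) := by
          have : 2 * (r-1) ≤ n + r := by omega
          exact_mod_cast this
        linarith
      calc Real.exp (((r-1:ℕ):ℝ) / ((n+r:ℕ):ℝ)) ≤ Real.exp (1/2) := Real.exp_le_exp.2 hle
        _ ≤ 2 := le_of_lt exp_half_lt_two
    calc (((n+r:ℕ):ℝ) + 1) ^ (r-1) ≤ 2 * ((n+r:ℕ):ℝ) ^ (r-1) := h4
      _ ≤ 2 * (((r-1).factorial : ℝ) * 2^(n-r)) := by linarith
      _ = ((r-1).factorial : ℝ) * (2^(n-r) * 2) := by ring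

-- m! * 2^(m-1) ≤ m^m for m ≥ 1
lemma fact_two_pow (m : ℕ) (hm : 1 ≤ m) :
    (m.factorial : ℝ) * 2 ^ (m - 1) ≤ (m : ℝ) ^ m := by
  induction m, hm using Nat.le_induction with
  | base => norm_num
  | succ m hm ih =>
    have hm0 : (0:ℝ) < m := by exact_mod_cast hm
    have h1 : (m + 1 - 1) = (m - 1) + 1 := by omega
    rw [h1, Nat.factorial_succ, pow_succ]
    push_cast
    have hbern : (2:ℝ) * (m:ℝ)^m ≤ ((m:ℝ)+1)^m := by
      have h := one_add_mul_le_pow (a := 1/(m:ℝ)) (le_trans (by norm_num) (by positivity : (0:ℝ) ≤ 1/(m:ℝ))) m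
      have heq : ((1:ℝ) + 1/m) * m = (m:ℝ) + 1 := by field_simp
      have h2 : (2:ℝ) ≤ (1 + 1/(m:ℝ))^m := by
        have he : (1:ℝ) + (m:ℕ) * (1/(m:ℝ)) = 2 := by
          rw [mul_one_div, div_self (ne_of_gt hm0)]; norm_num
        linarith [h]
      calc (2:ℝ) * (m:ℝ)^m ≤ (1 + 1/(m:ℝ))^m * (m:ℝ)^m := by
            nlinarith [pow_pos hm0 m]
        _ = ((1 + 1/(m:ℝ)) * m)^m := by rw [mul_pow]
        _ = ((m:ℝ)+1)^m := by rw [heq]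
    calc ((m:ℝ)+1) * (m.factorial:ℝ) * (2^(m-1) * 2)
          = ((m:ℝ)+1) * 2 * ((m.factorial:ℝ) * 2^(m-1)) := by ring
      _ ≤ ((m:ℝ)+1) * 2 * (m:ℝ)^m := by
          apply mul_le_mul_of_nonneg_left ih (by positivity)
      _ = ((m:ℝ)+1) * (2 * (m:ℝ)^m) := by ring
      _ ≤ ((m:ℝ)+1) * ((m:ℝ)+1)^m := by
          apply mul_le_mul_of_nonneg_left hbern (by positivity)
      _ = ((m:ℝ)+1)^(m+1) := by rw [← pow_succ']

theorem stmt_8 (r n : ℕ) (hr : 2 ≤ r) (hn : 6 * r ≤ n) :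
    ((n + r).choose (r - 1) : ℝ) ≤
      ((n - r + 1 : ℕ) : ℝ) ^ (n - r + 1) / ((n - r + 1).factorial : ℝ) := by
  set m := n - r + 1 with hm
  have hfp : (0:ℝ) < (m.factorial : ℝ) := by positivity
  rw [le_div_iff₀ hfp]
  -- choose ≤ 2^(n-r)
  have hch : ((n + r).choose (r - 1) : ℝ) ≤ 2 ^ (n - r) := by
    have h1 : ((n + r).choose (r - 1) : ℝ) ≤ ((n+r:ℕ):ℝ) ^ (r-1) / ((r-1).factorial : ℝ) := by
      have := Nat.choose_le_pow_div (α := ℝ) (r-1) (n+r)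
      push_cast at this ⊢
      exact this
    have h2 := key r n hr hn
    have hfp2 : (0:ℝ) < ((r-1).factorial : ℝ) := by positivity
    rw [le_div_iff₀ hfp2] at h1
    exact le_of_mul_le_mul_right (h1.trans (h2.trans_eq (mul_comm _ _))) hfp2
  have hmm : m - 1 = n - r := by omega
  have hfin : (m.factorial : ℝ) * 2 ^ (n - r) ≤ (m:ℝ)^m := by
    have := fact_two_pow m (by omega)
    rwa [hmm] at this
  calc ((n + r).choose (r - 1) : ℝ) * (m.factorial : ℝ)
        ≤ 2 ^ (n-r) * (m.factorial : ℝ) := by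
          apply mul_le_mul_of_nonneg_right hch (le_of_lt hfp)
    _ = (m.factorial : ℝ) * 2 ^ (n-r) := by ring
    _ ≤ (m:ℝ)^m := hfin
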